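/- arXiv:1508.05936 — 5 statements merged into one kernel-verified Lean document; each statement's English description precedes it below -/
import Mathlib

section
/- Let (H, Γ₁, Γ₂) be a boundary triplet for a closed densely defined symmetric operator T, and let K be a contraction on H. Then the restriction L_K of T* to { f ∈ Dom(T*) : (K − I)Γ₁f + i(K + I)Γ₂f = 0 } is a dissipative extension of T, i.e., Im(L_K f, f) ≥ 0 for all f ∈ Dom(L_K). -/
open MeasureTheory

local notation "⟪" x ", " y "⟫" => @inner ℂ _ _ x y

/-- `(B, Γ₁, Γ₂)` is a boundary triplet for the closed densely defined symmetric operator `T`: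
the abstract Green identity holds on `Dom T*` and the joint boundary map is surjective. -/
def IsBoundaryTriplet {E B : Type*} [NormedAddCommGroup E] [InnerProductSpace ℂ E]
    [CompleteSpace E] [NormedAddCommGroup B] [InnerProductSpace ℂ B]
    (T : E →ₗ.[ℂ] E) (Γ₁ Γ₂ : T.adjoint.domain →ₗ[ℂ] B) : Prop :=
  (∀ f g : T.adjoint.domain,
      ⟪T.adjoint f, (g : E)⟫ - ⟪(f : E), T.adjoint g⟫ = ⟪Γ₁ f, Γ₂ g⟫ - ⟪Γ₂ f, Γ₁ g⟫) ∧
  (∀ b₁ b₂ : B, ∃ f : T.adjoint.domain, Γ₁ f = b₁ ∧ Γ₂ f = b₂)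

/-- For a contraction `K`, the restriction `L_K` of `T*` by the boundary condition
`(K − I)Γ₁f + i(K + I)Γ₂f = 0` is a dissipative extension of `T`. -/
theorem restriction_dissipative_extension
    {E B : Type*} [NormedAddCommGroup E] [InnerProductSpace ℂ E] [CompleteSpace E]
    [NormedAddCommGroup B] [InnerProductSpace ℂ B]
    (T : E →ₗ.[ℂ] E)
    (hd : Dense (T.domain : Set E)) (hc : T.IsClosed)
    (hsym : ∀ f g : T.domain, ⟪T f, (g : E)⟫ = ⟪(f : E), T g⟫)
    (Γ₁ Γ₂ : T.adjoint.domain →ₗ[ℂ] B) (ht : IsBoundaryTriplet T Γ₁ Γ₂)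
    (K : B →L[ℂ] B) (hK : ‖K‖ ≤ 1) :
    -- `L_K` extends `T` : every `f ∈ Dom T` lies in `Dom L_K`
    (∀ f : T.domain, ∃ hf : (f : E) ∈ T.adjoint.domain,
      (K - 1) (Γ₁ ⟨(f : E), hf⟩) + Complex.I • ((K + 1) (Γ₂ ⟨(f : E), hf⟩)) = 0) ∧
    -- `L_K` is dissipative : `Im (L_K f, f) ≥ 0` on its domain
    (∀ f : T.adjoint.domain,
      (K - 1) (Γ₁ f) + Complex.I • ((K + 1) (Γ₂ f)) = 0 →
      0 ≤ (⟪(f : E), T.adjoint f⟫).im) := by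
  obtain ⟨hgreen, hsurj⟩ := ht
  constructor
  · intro f
    have hf : (f : E) ∈ T.adjoint.domain :=
      LinearPMap.mem_adjoint_domain_of_exists _ ⟨T f, fun x => hsym f x⟩
    refine ⟨hf, ?_⟩
    set f' : T.adjoint.domain := ⟨(f : E), hf⟩ with hf'
    have hadj : T.adjoint f' = T f :=
      LinearPMap.adjoint_apply_eq hd _ (fun x => hsym f x)
    -- the Green identity LHS vanishes for `f ∈ Dom T`
    have hzero : ∀ g : T.adjoint.domain, ⟪Γ₁ f', Γ₂ g⟫ - ⟪Γ₂ f', Γ₁ g⟫ = 0 := by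
      intro g
      rw [← hgreen f' g, hadj]
      have h1 : ⟪T.adjoint g, (f : E)⟫ = ⟪(g : E), T f⟫ :=
        LinearPMap.adjoint_isFormalAdjoint hd g f
      have h2 : ⟪(f' : E), T.adjoint g⟫ = ⟪T f, (g : E)⟫ := by
        rw [← inner_conj_symm, h1, inner_conj_symm]
      rw [h2, sub_self]
    have hΓ₁ : Γ₁ f' = 0 := by
      obtain ⟨g, hg1, hg2⟩ := hsurj 0 (Γ₁ f')
      have := hzero g
      rw [hg1, hg2, inner_zero_right, sub_zero] at this
      exact inner_self_eq_zero.mp this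
    have hΓ₂ : Γ₂ f' = 0 := by
      obtain ⟨g, hg1, hg2⟩ := hsurj (Γ₂ f') 0
      have := hzero g
      rw [hg1, hg2, inner_zero_right, zero_sub, neg_eq_zero] at this
      exact inner_self_eq_zero.mp this
    rw [hΓ₁, hΓ₂, map_zero, map_zero, smul_zero, add_zero]
  · intro f hb
    set u := Γ₁ f with hu
    set v := Γ₂ f with hv
    -- boundary condition gives `K (u + i v) = u - i v`
    have hKeq : K (u + Complex.I • v) = u - Complex.I • v := by
      have : K u - u + (Complex.I • K v + Complex.I • v) = 0 := by
        simpa [ContinuousLinearMap.sub_apply, ContinuousLinearMap.add_apply,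
          smul_add] using hb
      rw [map_add, K.map_smul]
      linear_combination (norm := module) this
    have hle : ‖u - Complex.I • v‖ ≤ ‖u + Complex.I • v‖ := by
      calc ‖u - Complex.I • v‖ = ‖K (u + Complex.I • v)‖ := by rw [hKeq]
        _ ≤ ‖K‖ * ‖u + Complex.I • v‖ := K.le_opNorm _
        _ ≤ 1 * ‖u + Complex.I • v‖ := by
            exact mul_le_mul_of_nonneg_right hK (norm_nonneg _)
        _ = ‖u + Complex.I • v‖ := one_mul _
    have hsq : ‖u - Complex.I • v‖ ^ 2 ≤ ‖u + Complex.I • v‖ ^ 2 :=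
      pow_le_pow_left₀ (norm_nonneg _) hle 2
    have him : (⟪u, v⟫).im ≤ 0 := by
      rw [@norm_add_sq ℂ, @norm_sub_sq ℂ] at hsq
      simp only [inner_smul_right, RCLike.re_to_complex, Complex.mul_re,
        Complex.I_re, Complex.I_im] at hsq
      have hIre : (Complex.I * ⟪u, v⟫).re = -(⟪u, v⟫).im := by
        simp [Complex.mul_re]
      nlinarith [hsq]
    have hg := hgreen f f
    have hlhs : (⟪T.adjoint f, (f : E)⟫ - ⟪(f : E), T.adjoint f⟫).im
        = -2 * (⟪(f : E), T.adjoint f⟫).im := by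
      have h : (⟪T.adjoint f, (f : E)⟫).im = -(⟪(f : E), T.adjoint f⟫).im := by
        rw [← inner_conj_symm]; exact Complex.conj_im _
      rw [Complex.sub_im, h]; ring
    have hrhs : (⟪Γ₁ f, Γ₂ f⟫ - ⟪Γ₂ f, Γ₁ f⟫).im = 2 * (⟪u, v⟫).im := by
      have h : (⟪Γ₂ f, Γ₁ f⟫).im = -(⟪Γ₁ f, Γ₂ f⟫).im := by
        rw [← inner_conj_symm]; exact Complex.conj_im _
      rw [Complex.sub_im, h]; ring
    have := congrArg Complex.im hg
    rw [hlhs, hrhs] at this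
    linarith
end

section
/- Let (H, Γ₁, Γ₂) be a boundary triplet for a closed densely defined symmetric operator T, and let K be a contraction on H. Then the restriction L^K of T* to { f ∈ Dom(T*) : (K − I)Γ₁f − i(K + I)Γ₂f = 0 } is an accumulative extension of T, i.e., Im(L^K f, f) ≤ 0 for all f ∈ Dom(L^K). -/
open MeasureTheory

local notation "⟪" x ", " y "⟫" => @inner ℂ _ _ x y

/-- For a contraction `K`, the restriction `L^K` of `T*` by the boundary condition
`(K − I)Γ₁f − i(K + I)Γ₂f = 0` is an accumulative extension of `T`. -/
theorem restriction_accumulative_extension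
    {E B : Type*} [NormedAddCommGroup E] [InnerProductSpace ℂ E] [CompleteSpace E]
    [NormedAddCommGroup B] [InnerProductSpace ℂ B]
    (T : E →ₗ.[ℂ] E)
    (hd : Dense (T.domain : Set E)) (hc : T.IsClosed)
    (hsym : ∀ f g : T.domain, ⟪T f, (g : E)⟫ = ⟪(f : E), T g⟫)
    (Γ₁ Γ₂ : T.adjoint.domain →ₗ[ℂ] B) (ht : IsBoundaryTriplet T Γ₁ Γ₂)
    (K : B →L[ℂ] B) (hK : ‖K‖ ≤ 1) :
    -- `L^K` extends `T` : every `f ∈ Dom T` lies in `Dom L^K`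
    (∀ f : T.domain, ∃ hf : (f : E) ∈ T.adjoint.domain,
      (K - 1) (Γ₁ ⟨(f : E), hf⟩) - Complex.I • ((K + 1) (Γ₂ ⟨(f : E), hf⟩)) = 0) ∧
    -- `L^K` is accumulative : `Im (L^K f, f) ≤ 0` on its domain
    (∀ f : T.adjoint.domain,
      (K - 1) (Γ₁ f) - Complex.I • ((K + 1) (Γ₂ f)) = 0 →
      (⟪(f : E), T.adjoint f⟫).im ≤ 0) := by
  obtain ⟨green, surj⟩ := ht
  have hFA : T.IsFormalAdjoint T := fun x y => hsym x y
  have hle : T ≤ T.adjoint := hFA.le_adjoint hd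
  have hadj := T.adjoint_isFormalAdjoint hd
  -- key accumulative computation
  have acc : ∀ f : T.adjoint.domain,
      (K - 1) (Γ₁ f) - Complex.I • ((K + 1) (Γ₂ f)) = 0 →
      (⟪(f : E), T.adjoint f⟫).im ≤ 0 := by
    intro f hbc
    set u := Γ₁ f with hu
    set v := Γ₂ f with hv
    -- from boundary condition: K (u - I•v) = u + I•v
    have hKeq : K (u - Complex.I • v) = u + Complex.I • v := by
      have h1 : K u - u - (Complex.I • (K v) + Complex.I • v) = 0 := by
        simpa [ContinuousLinearMap.sub_apply, ContinuousLinearMap.add_apply,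
          ContinuousLinearMap.one_apply, smul_add] using hbc
      have h2 : K u - u = Complex.I • (K v) + Complex.I • v := by
        have := sub_eq_zero.mp h1; linear_combination (norm := module) this
      have : K (u - Complex.I • v) = K u - Complex.I • K v := by
        simp [map_sub, K.map_smul]
      rw [this]
      linear_combination (norm := module) h2
    have hnorm : ‖u + Complex.I • v‖ ≤ ‖u - Complex.I • v‖ := by
      calc ‖u + Complex.I • v‖ = ‖K (u - Complex.I • v)‖ := by rw [hKeq]
        _ ≤ ‖K‖ * ‖u - Complex.I • v‖ := K.le_opNorm _
        _ ≤ 1 * ‖u - Complex.I • v‖ := by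
            exact mul_le_mul_of_nonneg_right hK (norm_nonneg _)
        _ = ‖u - Complex.I • v‖ := one_mul _
    -- deduce Im ⟪u, v⟫ ≥ 0
    have him : 0 ≤ (⟪u, v⟫).im := by
      have hsq : ‖u + Complex.I • v‖ ^ 2 ≤ ‖u - Complex.I • v‖ ^ 2 := by
        exact pow_le_pow_left₀ (norm_nonneg _) hnorm 2
      have e1 : ‖u + Complex.I • v‖ ^ 2
          = ‖u‖ ^ 2 + 2 * RCLike.re (⟪u, Complex.I • v⟫) + ‖v‖ ^ 2 := by
        rw [@norm_add_sq ℂ]; simp [norm_smul]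
        rw [inner_smul_right, Complex.mul_re, Complex.I_re, Complex.I_im]; ring
      have e2 : ‖u - Complex.I • v‖ ^ 2
          = ‖u‖ ^ 2 - 2 * RCLike.re (⟪u, Complex.I • v⟫) + ‖v‖ ^ 2 := by
        rw [@norm_sub_sq ℂ]; simp [norm_smul]
        rw [inner_smul_right, Complex.mul_re, Complex.I_re, Complex.I_im]; ring
      have e3 : RCLike.re (⟪u, (Complex.I • v : B)⟫) = -(⟪u, v⟫).im := by
        rw [inner_smul_right]
        simp [Complex.mul_re, Complex.I_re, Complex.I_im]
      rw [e1, e2, e3] at hsq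
      linarith
    -- Green identity at (f, f)
    have hg := congrArg Complex.im (green f f)
    have e4 : (⟪(T.adjoint f : E), (f : E)⟫).im = -(⟪(f : E), (T.adjoint f : E)⟫).im := by
      simpa using inner_im_symm (𝕜 := ℂ) (T.adjoint f : E) ((f : E))
    have e5 : (⟪v, u⟫).im = -(⟪u, v⟫).im := by
      simpa using inner_im_symm (𝕜 := ℂ) v u
    simp only [Complex.sub_im] at hg
    rw [e4, e5] at hg
    linarith
  constructor
  · intro f
    have hf : (f : E) ∈ T.adjoint.domain := hle.1 f.2
    refine ⟨hf, ?_⟩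
    set f' : T.adjoint.domain := ⟨(f : E), hf⟩ with hf'
    have hTf : T.adjoint f' = T f := (hle.2 (x := f) (y := f') rfl).symm
    have key : ∀ g : T.adjoint.domain, ⟪Γ₁ f', Γ₂ g⟫ = ⟪Γ₂ f', Γ₁ g⟫ := by
      intro g
      have hg := green f' g
      have h1 : ⟪T.adjoint f', (g : E)⟫ = ⟪T f, (g : E)⟫ := by rw [hTf]
      have h2 : ⟪(f' : E), T.adjoint g⟫ = ⟪T f, (g : E)⟫ := by
        rw [← inner_conj_symm, hadj g f, inner_conj_symm]
      rw [h1, h2, sub_self] at hg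
      exact (sub_eq_zero.mp hg.symm)
    have hΓ1 : Γ₁ f' = 0 := by
      obtain ⟨g, hg1, hg2⟩ := surj 0 (Γ₁ f')
      have := key g
      rw [hg1, hg2, inner_zero_right] at this
      exact inner_self_eq_zero.mp this
    have hΓ2 : Γ₂ f' = 0 := by
      obtain ⟨g, hg1, hg2⟩ := surj (Γ₂ f') 0
      have := key g
      rw [hg1, hg2, inner_zero_right] at this
      exact inner_self_eq_zero.mp this.symm
    rw [hΓ1, hΓ2]
    simp
  · exact acc
end

section
/- Let K be a unitary matrix on Cⁿ. The subspace { (x, y) ∈ Cⁿ × Cⁿ : (K − I)x + i(K + I)y = 0 } is invariant under componentwise complex conjugation (x, y) ↦ (x̄, ȳ) if and only if K is symmetric, i.e., Kᵀ = K. -/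
open Matrix

lemma conj_mulVec {n : ℕ} (M : Matrix (Fin n) (Fin n) ℂ) (v : Fin n → ℂ) :
    star (M *ᵥ v) = (M.map (starRingEnd ℂ)) *ᵥ (star v) := by
  ext i
  simp only [Pi.star_apply, Matrix.mulVec, dotProduct, Matrix.map_apply]
  rw [star_sum]
  refine Finset.sum_congr rfl fun j _ => ?_
  rw [star_mul']
  rfl

/-- For a unitary `K`, the subspace `{(x, y) : (K − I)x + i(K + I)y = 0}` is invariant
under componentwise complex conjugation iff `K` is symmetric (`Kᵀ = K`). -/
theorem boundary_subspace_conjugation_invariant_iff_symmetric {n : ℕ}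
    (K : Matrix (Fin n) (Fin n) ℂ) (hK : K ∈ Matrix.unitaryGroup (Fin n) ℂ) :
    (∀ x y : Fin n → ℂ,
        (K - 1).mulVec x + Complex.I • ((K + 1).mulVec y) = 0 →
        (K - 1).mulVec (star x) + Complex.I • ((K + 1).mulVec (star y)) = 0) ↔
      K.transpose = K := by
  set s := starRingEnd ℂ with hs
  set Kb := K.map s with hKbdef
  have hKs : K * star K = 1 := (Matrix.mem_unitaryGroup_iff).mp hK
  have hmapsub : (K - 1).map s = Kb - 1 := by
    ext i j
    simp [Matrix.map_apply, Matrix.sub_apply, Matrix.one_apply, Kb, apply_ite (starRingEnd ℂ)]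
  have hmapadd : (K + 1).map s = Kb + 1 := by
    ext i j
    simp [Matrix.map_apply, Matrix.add_apply, Matrix.one_apply, Kb, apply_ite (starRingEnd ℂ)]
  have hsI : star Complex.I = -Complex.I := by
    simp [Complex.star_def, Complex.conj_I]
  constructor
  · intro h
    have key : K * Kb = 1 := by
      have main : ∀ z : Fin n → ℂ,
          ((K - 1) * (Kb + 1) + (K + 1) * (Kb - 1)) *ᵥ star z = 0 := by
        intro z
        have hx : (K - 1) *ᵥ ((K + 1) *ᵥ z)
            + Complex.I • ((K + 1) *ᵥ (Complex.I • ((K - 1) *ᵥ z))) = 0 := by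
          rw [Matrix.mulVec_smul, Matrix.mulVec_mulVec, Matrix.mulVec_mulVec,
            smul_smul, Complex.I_mul_I]
          have hc : (K - 1) * (K + 1) = (K + 1) * (K - 1) := by noncomm_ring
          rw [hc, neg_one_smul]
          exact add_neg_cancel _
        have h2 := h _ _ hx
        rw [conj_mulVec, hmapadd, star_smul, conj_mulVec, hmapsub] at h2
        rw [hsI, Matrix.mulVec_smul, Matrix.mulVec_mulVec, Matrix.mulVec_mulVec,
          smul_smul] at h2
        have hc : Complex.I * -Complex.I = 1 := by
          rw [mul_neg, Complex.I_mul_I]; ring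
        rw [hc, one_smul, ← Matrix.add_mulVec] at h2
        exact h2
      have hM : (K - 1) * (Kb + 1) + (K + 1) * (Kb - 1) = 0 := by
        ext i j
        have := congrFun (main (star (Pi.single j 1))) i
        rw [star_star, Matrix.mulVec_single_one] at this
        simpa using this
      have hexp : (K - 1) * (Kb + 1) + (K + 1) * (Kb - 1)
          = (2 : ℂ) • (K * Kb - 1) := by
        rw [two_smul]; noncomm_ring
      rw [hexp] at hM
      have h2 : K * Kb - 1 = 0 := by
        have := smul_eq_zero.mp hM
        rcases this with h | h
        · exact absurd h two_ne_zero
        · exact h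
      exact sub_eq_zero.mp h2
    -- K invertible, so Kb = star K
    have hKb : Kb = star K := by
      have h1 : Kb * K = 1 := mul_eq_one_comm.mp key
      calc Kb = Kb * (K * star K) := by rw [hKs, mul_one]
        _ = (Kb * K) * star K := by rw [mul_assoc]
        _ = star K := by rw [h1, one_mul]
    ext i j
    have := congrFun (congrFun hKb i) j
    rw [hKbdef] at this
    simp only [Matrix.map_apply, Matrix.star_apply, Matrix.conjTranspose_apply] at this
    have := congrArg star this
    simpa using this.symm
  · intro hsym x y hxy
    have hKb : Kb = star K := by
      ext i j
      have he : K i j = K j i := (congrFun (congrFun hsym i) j : K j i = K i j).symm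
      simp only [hKbdef, Matrix.map_apply, Matrix.star_apply,
        Matrix.conjTranspose_apply, he]
      rfl
    have hKKb : K * Kb = 1 := by rw [hKb]; exact hKs
    have h2 := congrArg star hxy
    rw [star_add, star_zero, conj_mulVec, hmapsub, star_smul, conj_mulVec, hmapadd,
      hsI] at h2
    have h3 := congrArg (fun v => K *ᵥ v) h2
    simp only [Matrix.mulVec_add, Matrix.mulVec_smul, Matrix.mulVec_mulVec,
      Matrix.mulVec_zero] at h3
    rw [mul_sub, mul_add, mul_one, hKKb, neg_smul] at h3
    have h4 : (1 - K) *ᵥ star x = Complex.I • ((1 + K) *ᵥ star y) := by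
      have := add_neg_eq_zero.mp h3
      exact this
    have e1 : (K - 1) *ᵥ star x = -((1 - K) *ᵥ star x) := by
      rw [← Matrix.neg_mulVec, neg_sub]
    have e2 : (1 + K) = (K + 1) := add_comm 1 K
    rw [e1, h4, e2, neg_add_cancel]
end

section
/- Let J : 𝓗 → 𝓗 be a conjugation (antilinear, involutive, isometric) on a complex Hilbert space and let A be a maximal dissipative operator with J Dom(A) = Dom(A) and JAJ = A (A is real with respect to J). Then A is self-adjoint. -/
local notation "⟪" x ", " y "⟫" => @inner ℂ _ _ x y

section RMDaux

variable {E : Type*} [NormedAddCommGroup E] [InnerProductSpace ℂ E]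

theorem rmd_graph_closure_prop (A : E →ₗ.[ℂ] E) {C : Set (E × E)} (hC : IsClosed C)
    (hsub : ∀ f : A.domain, ((f : E), A f) ∈ C) {p : E × E}
    (hp : p ∈ A.graph.topologicalClosure) : p ∈ C := by
  have h1 : (A.graph : Set (E × E)) ⊆ C := by
    rintro q hq
    rw [SetLike.mem_coe, LinearPMap.mem_graph_iff] at hq
    obtain ⟨y, h1, h2⟩ := hq
    have := hsub y
    rwa [h1, h2] at this
  have h2 : (p : E × E) ∈ closure (A.graph : Set (E × E)) := by
    rwa [← Submodule.topologicalClosure_coe] at *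
  exact closure_minimal h1 hC h2

theorem rmd_closable (A : E →ₗ.[ℂ] E) (hd : Dense (A.domain : Set E))
    (hsym : ∀ f g : A.domain, ⟪A f, (g : E)⟫ = ⟪(f : E), A g⟫) : A.IsClosable := by
  refine ⟨(A.graph.topologicalClosure).toLinearPMap,
    (Submodule.toLinearPMap_graph_eq _ ?_).symm⟩
  intro x hx hx0
  apply hd.eq_zero_of_inner_right ℂ
  rintro w' hw'
  obtain ⟨w, rfl⟩ : ∃ w : A.domain, (w : E) = w' := ⟨⟨w', hw'⟩, rfl⟩
  have hC : IsClosed {p : E × E | ⟪A w, p.1⟫ = ⟪(w : E), p.2⟫} :=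
    isClosed_eq (continuous_const.inner continuous_fst) (continuous_const.inner continuous_snd)
  have := rmd_graph_closure_prop A hC (fun f => (hsym w f)) hx
  simp only [Set.mem_setOf_eq, hx0, inner_zero_right] at this
  exact this.symm

theorem rmd_closure_diss (A : E →ₗ.[ℂ] E) (hcl : A.IsClosable)
    (hdiss : ∀ f : A.domain, 0 ≤ (⟪(f : E), A f⟫).im) :
    ∀ f : A.closure.domain, 0 ≤ (⟪(f : E), A.closure f⟫).im := by
  intro f
  have hC : IsClosed {p : E × E | 0 ≤ (⟪p.1, p.2⟫).im} := by
    have : Continuous fun p : E × E => (⟪p.1, p.2⟫).im :=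
      Complex.continuous_im.comp (continuous_fst.inner continuous_snd)
    exact isClosed_Ici.preimage this
  have hg : ((f : E), A.closure f) ∈ A.closure.graph := A.closure.mem_graph f
  rw [← hcl.graph_closure_eq_closure_graph] at hg
  exact rmd_graph_closure_prop A hC (fun f => hdiss f) hg

theorem rmd_symm (A : E →ₗ.[ℂ] E) (him : ∀ f : A.domain, (⟪(f : E), A f⟫).im = 0)
    (f g : A.domain) : ⟪A f, (g : E)⟫ = ⟪(f : E), A g⟫ := by
  have h0 := him f
  have h0' := him g
  have h1 := him (f + g)
  have h2 := him (f + Complex.I • g)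
  simp only [LinearPMap.map_add, LinearPMap.map_smul, Submodule.coe_add, Submodule.coe_smul,
    inner_add_left, inner_add_right, inner_smul_left, inner_smul_right, Complex.add_im,
    Complex.mul_im, Complex.add_re, Complex.mul_re, Complex.conj_re, Complex.conj_im,
    Complex.I_re, Complex.I_im] at h1 h2
  rw [← inner_conj_symm]
  apply Complex.ext <;>
    simp only [Complex.conj_re, Complex.conj_im] <;> nlinarith [h0, h0', h1, h2]

variable [CompleteSpace E]

theorem rmd_nplus (A : E →ₗ.[ℂ] E) (hd : Dense (A.domain : Set E))
    (him : ∀ f : A.domain, (⟪(f : E), A f⟫).im = 0)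
    (hle : A ≤ A.adjoint)
    (hmax : ∀ B : E →ₗ.[ℂ] E, (∀ f : B.domain, 0 ≤ (⟪(f : E), B f⟫).im) → A ≤ B → B = A)
    (u : A.adjoint.domain) (hu : A.adjoint u = Complex.I • (u : E)) : (u : E) = 0 := by
  have hfa : A.adjoint.IsFormalAdjoint A := A.adjoint_isFormalAdjoint hd
  set L : A.adjoint.domain →ₗ[ℂ] E :=
    A.adjoint.toFun - Complex.I • A.adjoint.domain.subtype with hL
  set K : Submodule ℂ E := (LinearMap.ker L).map A.adjoint.domain.subtype with hK
  set S : Submodule ℂ E := A.domain ⊔ K with hS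
  have hSle : S ≤ A.adjoint.domain := sup_le hle.1 (Submodule.map_subtype_le _ _)
  set B : E →ₗ.[ℂ] E := A.adjoint.domRestrict S with hB
  have hBdom : B.domain = S ⊓ A.adjoint.domain := A.adjoint.domRestrict_domain
  have hAB : A ≤ B := by
    constructor
    · rw [hBdom]; exact le_inf le_sup_left hle.1
    · intro x y hxy
      have hyT : (y : E) ∈ A.adjoint.domain := y.2.2
      have h1 : B y = A.adjoint ⟨(y : E), hyT⟩ := LinearPMap.domRestrict_apply rfl
      rw [h1]
      exact hle.2 hxy
  have hBdiss : ∀ f : B.domain, 0 ≤ (⟪(f : E), B f⟫).im := by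
    intro f
    have hfS : (f : E) ∈ S := f.2.1
    rw [hS, Submodule.mem_sup] at hfS
    obtain ⟨a, ha, w, hw, haw⟩ := hfS
    rw [hK, Submodule.mem_map] at hw
    obtain ⟨w', hw', rfl⟩ := hw
    rw [LinearMap.mem_ker, hL, LinearMap.sub_apply, LinearMap.smul_apply, sub_eq_zero] at hw'
    have hTw : A.adjoint w' = Complex.I • (w' : E) := hw'
    have hamem : a ∈ A.adjoint.domain := hle.1 ha
    have hTa : A.adjoint ⟨a, hamem⟩ = A ⟨a, ha⟩ :=
      (hle.2 (x := ⟨a, ha⟩) (y := ⟨a, hamem⟩) rfl).symm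
    have hBf : B f = A.adjoint ⟨(f : E), f.2.2⟩ := LinearPMap.domRestrict_apply rfl
    have hsplit : (⟨(f : E), f.2.2⟩ : A.adjoint.domain) = ⟨a, hamem⟩ + w' := by
      apply Subtype.ext
      simp [← haw]
    have hBf' : B f = A ⟨a, ha⟩ + Complex.I • (w' : E) := by
      rw [hBf, hsplit, LinearPMap.map_add, hTa, hTw]
    have hcross : ⟪(w' : E), A ⟨a, ha⟩⟫ = -Complex.I * ⟪(w' : E), a⟫ := by
      rw [← hfa w' ⟨a, ha⟩, hTw, inner_smul_left]
      simp
    have hnorm : ⟪(w' : E), (w' : E)⟫ = ((‖(w' : E)‖ ^ 2 : ℝ) : ℂ) := by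
      rw [inner_self_eq_norm_sq_to_K (𝕜 := ℂ)]; norm_cast
    have hfcoe : (f : E) = a + (w' : E) := haw.symm
    have hexp : ⟪(f : E), B f⟫ = ⟪a, A ⟨a, ha⟩⟫ + Complex.I * ((starRingEnd ℂ) ⟪(w' : E), a⟫)
        + (-Complex.I * ⟪(w' : E), a⟫) + Complex.I * ((‖(w' : E)‖ ^ 2 : ℝ) : ℂ) := by
      rw [hfcoe, hBf']
      rw [inner_add_left, inner_add_right, inner_add_right, inner_smul_right, inner_smul_right,
        hcross, hnorm, ← inner_conj_symm a (w' : E)]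
      ring
    have h0 := him ⟨a, ha⟩
    rw [hexp]
    simp only [Complex.add_im, Complex.mul_im, Complex.neg_im, Complex.neg_re, Complex.I_re,
      Complex.I_im, Complex.conj_re, Complex.conj_im, Complex.ofReal_re,
      Complex.ofReal_im]
    simp only [h0]
    nlinarith [sq_nonneg ‖(w' : E)‖]
  have hBA : B = A := hmax B hBdiss hAB
  have hu' : (u : E) ∈ K := by
    rw [hK, Submodule.mem_map]
    refine ⟨u, ?_, rfl⟩
    rw [LinearMap.mem_ker, hL, LinearMap.sub_apply, LinearMap.smul_apply, sub_eq_zero]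
    exact hu
  have huB : (u : E) ∈ B.domain := by
    rw [hBdom]
    exact Submodule.mem_inf.mpr ⟨(le_sup_right : K ≤ S) hu', u.2⟩
  rw [hBA] at huB
  have hval : A ⟨(u : E), huB⟩ = Complex.I • (u : E) := by
    rw [hle.2 (x := ⟨(u : E), huB⟩) (y := u) rfl]; exact hu
  have h0 := him ⟨(u : E), huB⟩
  have hnu : ⟪(u : E), (u : E)⟫ = ((‖(u : E)‖ ^ 2 : ℝ) : ℂ) := by
    rw [inner_self_eq_norm_sq_to_K (𝕜 := ℂ)]; norm_cast
  rw [hval, inner_smul_right] at h0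
  simp only [Submodule.coe_mk] at h0
  rw [hnu] at h0
  have h1 : ‖(u : E)‖ ^ 2 = 0 := by
    simpa only [Complex.mul_im, Complex.I_re, Complex.I_im, Complex.ofReal_re,
      Complex.ofReal_im, zero_mul, one_mul, mul_zero, add_zero, zero_add] using h0
  rw [pow_eq_zero_iff (two_ne_zero)] at h1
  exact norm_eq_zero.mp h1

theorem rmd_surj (A : E →ₗ.[ℂ] E) (hclosed : A.IsClosed)
    (him : ∀ f : A.domain, (⟪(f : E), A f⟫).im = 0)
    (hdense : Dense {y : E | ∃ f : A.domain, A f + Complex.I • (f : E) = y}) (y : E) :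
    ∃ f : A.domain, A f + Complex.I • (f : E) = y := by
  have hest : ∀ f : A.domain, ‖(f : E)‖ ≤ ‖A f + Complex.I • (f : E)‖ ∧
      ‖A f‖ ≤ ‖A f + Complex.I • (f : E)‖ := by
    intro f
    have hre : (⟪A f, Complex.I • (f : E)⟫).re = 0 := by
      rw [inner_smul_right, ← inner_conj_symm]
      have := him f
      simp only [Complex.mul_re, Complex.I_re, Complex.I_im, Complex.conj_re, Complex.conj_im]
      simp [this]
    have hsq : ‖A f + Complex.I • (f : E)‖ ^ 2 = ‖A f‖ ^ 2 + ‖(f : E)‖ ^ 2 := by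
      have h := @norm_add_sq ℂ _ _ _ _ (A f) (Complex.I • (f : E))
      rw [h]
      have h2 : ‖Complex.I • (f : E)‖ = ‖(f : E)‖ := by
        rw [norm_smul]; simp
      rw [h2]
      have h3 : RCLike.re ⟪A f, Complex.I • (f : E)⟫ = 0 := hre
      rw [h3]
      ring
    constructor <;>
      nlinarith [norm_nonneg (A f + Complex.I • (f : E)), norm_nonneg (A f),
        norm_nonneg ((f : E)), hsq]
  have hyc : y ∈ closure {y : E | ∃ f : A.domain, A f + Complex.I • (f : E) = y} := by
    rw [hdense.closure_eq]; trivial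
  rw [mem_closure_iff_seq_limit] at hyc
  obtain ⟨yseq, hmem, hlim⟩ := hyc
  choose fs hfs using hmem
  have hkey : ∀ m n : ℕ, dist ((fs m : E)) ((fs n : E)) ≤ dist (yseq m) (yseq n) ∧
      dist (A (fs m)) (A (fs n)) ≤ dist (yseq m) (yseq n) := by
    intro m n
    have h1 : A (fs m - fs n) + Complex.I • ((fs m - fs n : A.domain) : E)
        = yseq m - yseq n := by
      rw [LinearPMap.map_sub]
      push_cast [Submodule.coe_sub]
      rw [smul_sub, ← hfs m, ← hfs n]
      abel
    have h2 := hest (fs m - fs n)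
    rw [h1] at h2
    simp only [dist_eq_norm]
    constructor
    · simpa [Submodule.coe_sub] using h2.1
    · simpa [LinearPMap.map_sub] using h2.2
  have hyCauchy : CauchySeq yseq := hlim.cauchySeq
  have hfC : CauchySeq fun n => ((fs n : E)) := by
    rw [Metric.cauchySeq_iff] at hyCauchy ⊢
    intro ε hε
    obtain ⟨N, hN⟩ := hyCauchy ε hε
    exact ⟨N, fun m hm n hn => lt_of_le_of_lt ((hkey m n).1) (hN m hm n hn)⟩
  have hAfC : CauchySeq fun n => A (fs n) := by
    rw [Metric.cauchySeq_iff] at hyCauchy ⊢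
    intro ε hε
    obtain ⟨N, hN⟩ := hyCauchy ε hε
    exact ⟨N, fun m hm n hn => lt_of_le_of_lt ((hkey m n).2) (hN m hm n hn)⟩
  obtain ⟨f₀, hf₀⟩ := cauchySeq_tendsto_of_complete hfC
  obtain ⟨z, hz⟩ := cauchySeq_tendsto_of_complete hAfC
  have hgraph : (f₀, z) ∈ A.graph := by
    have htend : Filter.Tendsto (fun n => (((fs n : E)), A (fs n))) Filter.atTop
        (nhds (f₀, z)) := hf₀.prodMk_nhds hz
    have hmemg : ∀ n, (((fs n : E)), A (fs n)) ∈ (A.graph : Set (E × E)) := by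
      intro n
      exact A.mem_graph (fs n)
    exact hclosed.mem_of_tendsto htend (Filter.Eventually.of_forall hmemg)
  rw [LinearPMap.mem_graph_iff] at hgraph
  obtain ⟨fy, hfy1, hfy2⟩ := hgraph
  refine ⟨fy, ?_⟩
  have hlim2 : Filter.Tendsto yseq Filter.atTop (nhds (z + Complex.I • f₀)) := by
    have : Filter.Tendsto (fun n => A (fs n) + Complex.I • ((fs n : E))) Filter.atTop
        (nhds (z + Complex.I • f₀)) := hz.add (hf₀.const_smul _)
    simpa only [hfs] using this
  have huniq : z + Complex.I • f₀ = y := tendsto_nhds_unique hlim2 hlim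
  simp only at hfy1 hfy2
  rw [hfy2, hfy1]
  exact huniq

end RMDaux

/-- Let `J` be a conjugation (antilinear, involutive, isometric) on a complex Hilbert
space and let `A` be a maximal dissipative operator (no proper dissipative extension)
which is real with respect to `J` (`J Dom A = Dom A` and `JAJ = A`).
Then `A` is self-adjoint. -/
theorem real_maximal_dissipative_selfAdjoint {E : Type*} [NormedAddCommGroup E]
    [InnerProductSpace ℂ E] [CompleteSpace E]
    (J : E → E)
    (hJ_add : ∀ f g : E, J (f + g) = J f + J g)
    (hJ_smul : ∀ (c : ℂ) (f : E), J (c • f) = (starRingEnd ℂ) c • J f)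
    (hJ_invol : ∀ f : E, J (J f) = f)
    (hJ_inner : ∀ f g : E, ⟪J f, J g⟫ = ⟪g, f⟫)
    (A : E →ₗ.[ℂ] E)
    (hd : Dense (A.domain : Set E))
    (hdiss : ∀ f : A.domain, 0 ≤ (⟪(f : E), A f⟫).im)
    (hmax : ∀ B : E →ₗ.[ℂ] E, (∀ f : B.domain, 0 ≤ (⟪(f : E), B f⟫).im) → A ≤ B → B = A)
    (hreal : ∀ f : A.domain, ∃ hf : J (f : E) ∈ A.domain, A ⟨J (f : E), hf⟩ = J (A f)) :
    A.adjoint = A := by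
  -- `J 0 = 0`
  have hJ0 : J 0 = 0 := by
    have := hJ_smul 0 0
    simpa using this
  -- imaginary parts vanish
  have him : ∀ f : A.domain, (⟪(f : E), A f⟫).im = 0 := by
    intro f
    obtain ⟨hf, hAf⟩ := hreal f
    have h1 := hdiss ⟨J (f : E), hf⟩
    simp only [Submodule.coe_mk] at h1
    rw [hAf, hJ_inner] at h1
    rw [← inner_conj_symm] at h1
    simp only [Complex.conj_im] at h1
    have h3 := hdiss f
    linarith
  have hsym := rmd_symm A him
  have hfa : A.IsFormalAdjoint A := fun f g => hsym f g
  have hle : A ≤ A.adjoint := hfa.le_adjoint hd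
  have hTfa : A.adjoint.IsFormalAdjoint A := A.adjoint_isFormalAdjoint hd
  -- closedness
  have hclosable : A.IsClosable := rmd_closable A hd hsym
  have hCA : A.closure = A := hmax A.closure (rmd_closure_diss A hclosable hdiss) A.le_closure
  have hclosed : A.IsClosed := by
    have := hclosable.closure_isClosed
    rwa [hCA] at this
  -- the adjoint is real with respect to J
  have hadj_real : ∀ g : A.adjoint.domain, ∃ hg : J (g : E) ∈ A.adjoint.domain,
      A.adjoint ⟨J (g : E), hg⟩ = J (A.adjoint g) := by
    intro g
    have hkey : ∀ x : A.domain, ⟪J (A.adjoint g), (x : E)⟫ = ⟪J (g : E), A x⟫ := by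
      intro x
      obtain ⟨hx, hAx⟩ := hreal x
      have h1 : A x = J (A ⟨J (x : E), hx⟩) := by rw [hAx, hJ_invol]
      calc ⟪J (A.adjoint g), (x : E)⟫
          = ⟪J (A.adjoint g), J (J (x : E))⟫ := by rw [hJ_invol]
        _ = ⟪J (x : E), A.adjoint g⟫ := hJ_inner _ _
        _ = (starRingEnd ℂ) ⟪A.adjoint g, J (x : E)⟫ := (inner_conj_symm _ _).symm
        _ = (starRingEnd ℂ) ⟪(g : E), A ⟨J (x : E), hx⟩⟫ := by rw [hTfa g ⟨J (x : E), hx⟩]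
        _ = ⟪A ⟨J (x : E), hx⟩, (g : E)⟫ := inner_conj_symm _ _
        _ = ⟪J (J (A ⟨J (x : E), hx⟩)), J (J (g : E))⟫ := by rw [hJ_invol, hJ_invol]
        _ = ⟪J (g : E), J (A ⟨J (x : E), hx⟩)⟫ := hJ_inner _ _
        _ = ⟪J (g : E), A x⟫ := by rw [← h1]
    have hg : J (g : E) ∈ A.adjoint.domain :=
      LinearPMap.mem_adjoint_domain_of_exists _ ⟨J (A.adjoint g), hkey⟩
    refine ⟨hg, ?_⟩
    exact LinearPMap.adjoint_apply_eq hd ⟨J (g : E), hg⟩ hkey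
  have hnplus := rmd_nplus A hd him hle hmax
  -- deficiency space for -I is trivial
  have hnminus : ∀ v : A.adjoint.domain, A.adjoint v = (-Complex.I) • (v : E) → (v : E) = 0 := by
    intro v hv
    obtain ⟨hg, hval⟩ := hadj_real v
    have h1 : A.adjoint ⟨J (v : E), hg⟩ = Complex.I • J (v : E) := by
      rw [hval, hv, hJ_smul]
      simp [Complex.conj_I]
    have h2 : J (v : E) = 0 := hnplus ⟨J (v : E), hg⟩ h1
    have := congrArg J h2
    rwa [hJ_invol, hJ0] at this
  -- density of the range of A + I
  have hdenseR : Dense {y : E | ∃ f : A.domain, A f + Complex.I • (f : E) = y} := by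
    set Ran : Submodule ℂ E :=
      LinearMap.range (A.toFun + Complex.I • A.domain.subtype) with hRan
    have hset : {y : E | ∃ f : A.domain, A f + Complex.I • (f : E) = y} = (Ran : Set E) := by
      ext y
      simp only [Set.mem_setOf_eq, SetLike.mem_coe, hRan, LinearMap.mem_range,
        LinearMap.add_apply, LinearMap.smul_apply]
      rfl
    rw [hset]
    rw [Submodule.dense_iff_topologicalClosure_eq_top,
      Submodule.topologicalClosure_eq_top_iff]
    rw [Submodule.eq_bot_iff]
    intro v hv
    rw [Submodule.mem_orthogonal'] at hv
    have hkey : ∀ x : A.domain, ⟪Complex.I • v, (x : E)⟫ = ⟪v, A x⟫ := by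
      intro x
      have h0 : ⟪v, A x + Complex.I • (x : E)⟫ = 0 := by
        apply hv
        exact ⟨x, rfl⟩
      rw [inner_add_right, inner_smul_right] at h0
      rw [inner_smul_left]
      simp only [Complex.conj_I]
      linear_combination -h0
    have hvmem : v ∈ A.adjoint.domain :=
      LinearPMap.mem_adjoint_domain_of_exists _ ⟨Complex.I • v, hkey⟩
    have hval : A.adjoint ⟨v, hvmem⟩ = Complex.I • v :=
      LinearPMap.adjoint_apply_eq hd ⟨v, hvmem⟩ hkey
    exact hnplus ⟨v, hvmem⟩ hval
  have hsurj := rmd_surj A hclosed him hdenseR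
  -- the adjoint is contained in A
  have hTle : A.adjoint ≤ A := by
    constructor
    · intro g hg
      obtain ⟨f, hf⟩ := hsurj (A.adjoint ⟨g, hg⟩ + Complex.I • g)
      have hfT : (f : E) ∈ A.adjoint.domain := hle.1 f.2
      have hvT : g - (f : E) ∈ A.adjoint.domain := Submodule.sub_mem _ hg hfT
      have hTv : A.adjoint ⟨g - (f : E), hvT⟩ = (-Complex.I) • (g - (f : E)) := by
        have hsplit : (⟨g - (f : E), hvT⟩ : A.adjoint.domain)
            = ⟨g, hg⟩ - ⟨(f : E), hfT⟩ := by
          apply Subtype.ext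
          simp
        rw [hsplit, LinearPMap.map_sub]
        have hTf : A.adjoint ⟨(f : E), hfT⟩ = A f :=
          (hle.2 (x := f) (y := ⟨(f : E), hfT⟩) rfl).symm
        rw [hTf]
        have : A f = A.adjoint ⟨g, hg⟩ + Complex.I • g - Complex.I • (f : E) := by
          rw [← hf]; abel
        rw [this]
        rw [smul_sub, neg_smul, neg_smul]
        abel
      have hv0 : g - (f : E) = 0 := hnminus ⟨g - (f : E), hvT⟩ hTv
      have : g = (f : E) := by
        have := sub_eq_zero.mp hv0
        exact this
      rw [this]
      exact f.2
    · intro x y hxy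
      have hx' : (x : E) ∈ A.domain := by rw [hxy]; exact y.2
      have h1 : A y = A.adjoint ⟨(y : E), hle.1 y.2⟩ :=
        hle.2 (x := y) (y := ⟨(y : E), hle.1 y.2⟩) rfl
      have h2 : x = (⟨(y : E), hle.1 y.2⟩ : A.adjoint.domain) := Subtype.ext hxy
      rw [h2, ← h1]
  exact le_antisymm hTle hle
end

section
/- The Cayley-type parametrization of boundary conditions is bijective: for a boundary triplet (H, Γ₁, Γ₂) of a symmetric operator T with dim H < ∞, the map K ↦ { f ∈ Dom(T*) : (K − I)Γ₁f + i(K + I)Γ₂f = 0 } is injective on contractions; i.e., if two contractions K₁, K₂ on H define the same restriction of T*, then K₁ = K₂. -/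
open MeasureTheory

local notation "⟪" x ", " y "⟫" => @inner ℂ _ _ x y

lemma cayley_key {B : Type*} [NormedAddCommGroup B] [InnerProductSpace ℂ B]
    (K : B →L[ℂ] B) (x y : B) :
    (K - 1) x + Complex.I • ((K + 1) y) =
      K (x + Complex.I • y) - (x - Complex.I • y) := by
  simp only [ContinuousLinearMap.sub_apply, ContinuousLinearMap.add_apply,
    ContinuousLinearMap.one_apply, map_add, _root_.map_smul]
  module

/-- The Cayley-type parametrization of boundary conditions is injective on contractions:
two contractions defining the same restriction of `T*` coincide. -/
theorem boundary_condition_parametrization_injective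
    {E B : Type*} [NormedAddCommGroup E] [InnerProductSpace ℂ E] [CompleteSpace E]
    [NormedAddCommGroup B] [InnerProductSpace ℂ B]
    (T : E →ₗ.[ℂ] E)
    (hd : Dense (T.domain : Set E)) (hc : T.IsClosed)
    (hsym : ∀ f g : T.domain, ⟪T f, (g : E)⟫ = ⟪(f : E), T g⟫)
    (Γ₁ Γ₂ : T.adjoint.domain →ₗ[ℂ] B) (ht : IsBoundaryTriplet T Γ₁ Γ₂)
    [FiniteDimensional ℂ B]
    (K₁ K₂ : B →L[ℂ] B) (hK₁ : ‖K₁‖ ≤ 1) (hK₂ : ‖K₂‖ ≤ 1)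
    (hsame : ∀ f : T.adjoint.domain,
      (K₁ - 1) (Γ₁ f) + Complex.I • ((K₁ + 1) (Γ₂ f)) = 0 ↔
      (K₂ - 1) (Γ₁ f) + Complex.I • ((K₂ + 1) (Γ₂ f)) = 0) :
    K₁ = K₂ := by
  obtain ⟨-, hsurj⟩ := ht
  ext b
  set x : B := (2:ℂ)⁻¹ • (b + K₁ b) with hx
  set y : B := (-(Complex.I)/2) • (b - K₁ b) with hy
  have hb1 : x + Complex.I • y = b := by
    rw [hx, hy]
    have : Complex.I • ((-(Complex.I)/2 : ℂ) • (b - K₁ b)) = (2:ℂ)⁻¹ • (b - K₁ b) := by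
      rw [smul_smul]
      congr 1
      field_simp
      rw [Complex.I_sq, neg_neg]
    rw [this]
    module
  have hb2 : x - Complex.I • y = K₁ b := by
    rw [hx, hy]
    have : Complex.I • ((-(Complex.I)/2 : ℂ) • (b - K₁ b)) = (2:ℂ)⁻¹ • (b - K₁ b) := by
      rw [smul_smul]
      congr 1
      field_simp
      rw [Complex.I_sq, neg_neg]
    rw [this]
    module
  obtain ⟨f, h1, h2⟩ := hsurj x y
  have hcond : (K₁ - 1) (Γ₁ f) + Complex.I • ((K₁ + 1) (Γ₂ f)) = 0 := by
    rw [h1, h2, cayley_key, hb1, hb2, sub_self]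
  have h2cond := (hsame f).mp hcond
  rw [h1, h2, cayley_key, hb1, hb2, sub_eq_zero] at h2cond
  exact h2cond.symm
end
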